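/- For every integer n ≥ 2, if ω = exp(2πi/6) is a primitive sixth root of unity, then 2·Re(Li_n(ω)) = (3^{1-n} - 1)·(2^{1-n} - 1)·ζ(n). -/

import Mathlib

/-- The classical polylogarithm `Li n z = ∑_{k ≥ 1} z^k / k^n`. -/
noncomputable def Li (n : ℕ) (z : ℂ) : ℂ := ∑' k : ℕ, z ^ (k + 1) / ((k : ℂ) + 1) ^ n

/-- The coefficient `2 cos(kπ/3)`. -/
noncomputable def ccoef (k : ℕ) : ℝ := 2 * Real.cos (k * Real.pi / 3)

lemma ccoef_period (k : ℕ) : ccoef (k + 6) = ccoef k := by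
  unfold ccoef
  have : ((k + 6 : ℕ) : ℝ) * Real.pi / 3 = (k : ℝ) * Real.pi / 3 + 2 * Real.pi := by
    push_cast; ring
  rw [this, Real.cos_add_two_pi]

lemma ccoef_eq (k : ℕ) : ccoef k =
    1 - (if 2 ∣ k then 2 else 0) - (if 3 ∣ k then 3 else 0) + (if 6 ∣ k then 6 else 0) := by
  induction k using Nat.strong_induction_on with
  | _ k ih =>
    rcases lt_or_ge k 6 with hk | hk
    · interval_cases k
      · norm_num [ccoef]
      · have h2 : ¬ (2 ∣ 1) := by decide
        have h3 : ¬ (3 ∣ 1) := by decide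
        have h6 : ¬ (6 ∣ 1) := by decide
        simp only [h2, h3, h6, if_false]
        show 2 * Real.cos ((1 : ℕ) * Real.pi / 3) = 1 - 0 - 0 + 0
        rw [Nat.cast_one, one_mul, Real.cos_pi_div_three]; norm_num
      · simp only [show (2:ℕ) ∣ 2 by decide, show ¬ (3:ℕ) ∣ 2 by decide,
          show ¬ (6:ℕ) ∣ 2 by decide, if_true, if_false]
        show 2 * Real.cos ((2 : ℕ) * Real.pi / 3) = 1 - 2 - 0 + 0
        have : ((2:ℕ):ℝ) * Real.pi / 3 = Real.pi - Real.pi / 3 := by push_cast; ring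
        rw [this, Real.cos_pi_sub, Real.cos_pi_div_three]; norm_num
      · simp only [show ¬ (2:ℕ) ∣ 3 by decide, show (3:ℕ) ∣ 3 by decide,
          show ¬ (6:ℕ) ∣ 3 by decide, if_true, if_false]
        show 2 * Real.cos ((3 : ℕ) * Real.pi / 3) = 1 - 0 - 3 + 0
        have : ((3:ℕ):ℝ) * Real.pi / 3 = Real.pi := by push_cast; ring
        rw [this, Real.cos_pi]; norm_num
      · simp only [show (2:ℕ) ∣ 4 by decide, show ¬ (3:ℕ) ∣ 4 by decide,
          show ¬ (6:ℕ) ∣ 4 by decide, if_true, if_false]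
        show 2 * Real.cos ((4 : ℕ) * Real.pi / 3) = 1 - 2 - 0 + 0
        have : ((4:ℕ):ℝ) * Real.pi / 3 = Real.pi / 3 + Real.pi := by push_cast; ring
        rw [this, Real.cos_add_pi, Real.cos_pi_div_three]; norm_num
      · simp only [show ¬ (2:ℕ) ∣ 5 by decide, show ¬ (3:ℕ) ∣ 5 by decide,
          show ¬ (6:ℕ) ∣ 5 by decide, if_false]
        show 2 * Real.cos ((5 : ℕ) * Real.pi / 3) = 1 - 0 - 0 + 0
        have : ((5:ℕ):ℝ) * Real.pi / 3 = 2 * Real.pi - Real.pi / 3 := by push_cast; ring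
        rw [this, Real.cos_two_pi_sub, Real.cos_pi_div_three]; norm_num
    · obtain ⟨m, rfl⟩ : ∃ m, k = m + 6 := ⟨k - 6, by omega⟩
      rw [ccoef_period, ih m (by omega)]
      have h2 : (2 ∣ m + 6) ↔ (2 ∣ m) := by omega
      have h3 : (3 ∣ m + 6) ↔ (3 ∣ m) := by omega
      have h6 : (6 ∣ m + 6) ↔ (6 ∣ m) := by omega
      simp only [h2, h3, h6]

theorem re_polylog_sixth_root (n : ℕ) (hn : 2 ≤ n)
    (ω : ℂ) (hω : ω = Complex.exp (2 * Real.pi * Complex.I / 6)) :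
    2 * (Li n ω).re = ((3 : ℝ) ^ ((1 : ℤ) - n) - 1) * ((2 : ℝ) ^ ((1 : ℤ) - n) - 1) * (riemannZeta n).re := by
  have hn1 : 1 < n := hn
  -- the basic series
  set h : ℕ → ℝ := fun k => 1 / (k : ℝ) ^ n with hh
  have hS : Summable h := Real.summable_one_div_nat_pow.mpr hn1
  set S : ℝ := ∑' k : ℕ, h k with hSdef
  -- zeta value
  have hzeta : (riemannZeta n).re = S := by
    rw [zeta_nat_eq_tsum_of_gt_one hn1]
    have : ∀ k : ℕ, (1 : ℂ) / (k : ℂ) ^ n = ((h k : ℝ) : ℂ) := by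
      intro k; simp only [hh]; push_cast; ring
    simp_rw [this]
    rw [← Complex.ofReal_tsum, Complex.ofReal_re]
  -- indicator sums
  have key : ∀ m : ℕ, 0 < m →
      ∑' k : ℕ, ({x : ℕ | m ∣ x}.indicator h) k = (1 / (m : ℝ) ^ n) * S := by
    intro m hm
    have hinj : Function.Injective (fun k : ℕ => m * k) := fun a b hab =>
      Nat.eq_of_mul_eq_mul_left hm hab
    have hsupp : Function.support ({x : ℕ | m ∣ x}.indicator h) ⊆
        Set.range (fun k : ℕ => m * k) := by
      intro x hx
      have : m ∣ x := by
        by_contra hdvd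
        exact hx (Set.indicator_of_notMem (by simpa using hdvd) h)
      obtain ⟨c, rfl⟩ := this
      exact ⟨c, rfl⟩
    rw [← hinj.tsum_eq hsupp]
    have : ∀ k : ℕ, ({x : ℕ | m ∣ x}.indicator h) (m * k) = (1 / (m : ℝ) ^ n) * h k := by
      intro k
      rw [Set.indicator_of_mem (by exact ⟨k, rfl⟩)]
      simp only [hh]
      push_cast
      rw [mul_pow]
      rcases Nat.eq_zero_or_pos k with rfl | hk
      · simp [zero_pow (by omega : n ≠ 0)]
      · field_simp
    simp_rw [this]
    exact tsum_mul_left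
  -- the real series for Li
  have homega : ω = Complex.exp ((Real.pi / 3 : ℝ) * Complex.I) := by
    rw [hω]; congr 1; push_cast; ring
  have hterm : ∀ k : ℕ, (ω ^ (k + 1) / ((k : ℂ) + 1) ^ n).re
      = ccoef (k + 1) / 2 * h (k + 1) := by
    intro k
    have hpow : ω ^ (k + 1) = Complex.exp ((((k : ℝ) + 1) * (Real.pi / 3) : ℝ) * Complex.I) := by
      rw [homega, ← Complex.exp_nat_mul]
      congr 1
      push_cast; ring
    have hden : ((k : ℂ) + 1) ^ n = ((((k : ℝ) + 1) ^ n : ℝ) : ℂ) := by push_cast; ring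
    rw [hpow, hden, Complex.div_ofReal_re, Complex.exp_ofReal_mul_I_re]
    simp only [ccoef, hh]
    push_cast
    ring
  have hsum_h1 : Summable (fun k : ℕ => h (k + 1)) := hS.comp_injective (add_left_injective 1)
  have hsumLi : Summable (fun k : ℕ => ω ^ (k + 1) / ((k : ℂ) + 1) ^ n) := by
    apply Summable.of_norm_bounded hsum_h1
    intro k
    have homabs : ‖ω‖ = 1 := by
      rw [homega, Complex.norm_exp]; simp
    rw [norm_div, norm_pow, norm_pow, homabs, one_pow]
    simp only [hh]
    have : ‖((k : ℂ) + 1)‖ = (k : ℝ) + 1 := by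
      rw [show ((k : ℂ) + 1) = (((k : ℝ) + 1 : ℝ) : ℂ) by push_cast; ring, Complex.norm_real, Real.norm_eq_abs,
        abs_of_nonneg (by positivity)]
    rw [this]
    push_cast
    exact le_refl _
  -- rewrite Li as a real series
  have hLi : (Li n ω).re = ∑' k : ℕ, ccoef (k + 1) / 2 * h (k + 1) := by
    rw [Li, Complex.re_tsum hsumLi]
    exact tsum_congr hterm
  set F : ℕ → ℝ := fun k => ccoef k * h k with hF
  have hF0 : F 0 = 0 := by
    simp [hF, hh, zero_pow (by omega : n ≠ 0)]
  have hFsum : Summable F := by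
    apply Summable.of_norm_bounded (hS.mul_left 2)
    intro k
    have hpos : 0 ≤ h k := by simp only [hh]; positivity
    rw [hF]
    calc ‖ccoef k * h k‖ = |ccoef k| * h k := by
          rw [norm_mul, Real.norm_eq_abs, Real.norm_eq_abs, abs_of_nonneg hpos]
      _ ≤ 2 * h k := by
          apply mul_le_mul_of_nonneg_right _ hpos
          rw [ccoef, abs_mul]
          calc |(2:ℝ)| * |Real.cos (k * Real.pi / 3)| ≤ |(2:ℝ)| * 1 :=
                mul_le_mul_of_nonneg_left (Real.abs_cos_le_one _) (abs_nonneg _)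
            _ = 2 := by norm_num
  have hLHS : 2 * (Li n ω).re = ∑' k : ℕ, F k := by
    rw [hLi, ← tsum_mul_left]
    rw [Summable.tsum_eq_zero_add hFsum, hF0, zero_add]
    exact tsum_congr fun k => by rw [hF]; ring
  -- decompose F
  set e2 := {x : ℕ | 2 ∣ x}.indicator h with he2
  set e3 := {x : ℕ | 3 ∣ x}.indicator h with he3
  set e6 := {x : ℕ | 6 ∣ x}.indicator h with he6
  have hFeq : ∀ k, F k = h k - 2 * e2 k - 3 * e3 k + 6 * e6 k := by
    intro k
    simp only [hF, he2, he3, he6, Set.indicator_apply, Set.mem_setOf_eq, ccoef_eq]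
    split_ifs <;> ring
  have hs2 : Summable e2 := hS.indicator _
  have hs3 : Summable e3 := hS.indicator _
  have hs6 : Summable e6 := hS.indicator _
  have hsplit : ∑' k : ℕ, F k =
      S - 2 * ∑' k, e2 k - 3 * ∑' k, e3 k + 6 * ∑' k, e6 k := by
    simp_rw [hFeq]
    rw [Summable.tsum_add (((hS.sub (hs2.mul_left 2)).sub (hs3.mul_left 3))) (hs6.mul_left 6),
      Summable.tsum_sub (hS.sub (hs2.mul_left 2)) (hs3.mul_left 3),
      Summable.tsum_sub hS (hs2.mul_left 2), tsum_mul_left, tsum_mul_left, tsum_mul_left]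
  rw [hLHS, hsplit, key 2 (by norm_num), key 3 (by norm_num), key 6 (by norm_num), hzeta]
  have h2 : (2:ℝ) ^ ((1:ℤ) - n) = 2 / 2 ^ n := by
    rw [zpow_sub₀ (by norm_num : (2:ℝ) ≠ 0), zpow_one, zpow_natCast]
  have h3 : (3:ℝ) ^ ((1:ℤ) - n) = 3 / 3 ^ n := by
    rw [zpow_sub₀ (by norm_num : (3:ℝ) ≠ 0), zpow_one, zpow_natCast]
  have h6 : (6:ℝ) ^ n = 2 ^ n * 3 ^ n := by
    rw [← mul_pow]; norm_num
  rw [h2, h3]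
  push_cast
  rw [h6]
  have h2p : (2:ℝ) ^ n ≠ 0 := by positivity
  have h3p : (3:ℝ) ^ n ≠ 0 := by positivity
  field_simp
  ring
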